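/- For m, n ∈ ℕ with m ≥ 3 odd, the discrete torus Z_m^n has exactly m · 2^(n−1) maximum independent sets, and each of them has cardinality ⌊m/2⌋ · m^(n−1). -/

import Mathlib

/-- The discrete torus `Z_m^n`: the graph on `(ZMod m)^n` where two vertices are adjacent
iff they differ by `±1 (mod m)` in exactly one coordinate. -/
def torus (m n : ℕ) : SimpleGraph (Fin n → ZMod m) :=
  SimpleGraph.fromRel fun u v =>
    ∃ j : Fin n, (u j = v j + 1 ∨ u j = v j - 1) ∧ ∀ i : Fin n, i ≠ j → u i = v i

/-- A set of vertices is independent if its vertices are pairwise non-adjacent. -/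
def IsIndep {V : Type*} (G : SimpleGraph V) (s : Set V) : Prop :=
  s.Pairwise fun u v => ¬ G.Adj u v

/-- `N_G(X) := (⋃ x ∈ X, N_G(x)) \ X`. -/
def nbhd {V : Type*} (G : SimpleGraph V) (X : Set V) : Set V :=
  (⋃ x ∈ X, G.neighborSet x) \ X

/-- `N_G(X, Y) := N_G(X) ∩ Y`. -/
def nbhdIn {V : Type*} (G : SimpleGraph V) (X Y : Set V) : Set V :=
  nbhd G X ∩ Y

/-- `E_m^n(p)`: the vertices of `Z_m^n` whose coordinate sum is `p` modulo `m`. -/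
def Eclass (m n : ℕ) (p : ZMod m) : Set (Fin n → ZMod m) :=
  {v | ∑ i, v i = p}

/-- A maximum independent set: an independent set of the largest possible cardinality. -/
def MaxIndep {V : Type*} (G : SimpleGraph V) (s : Set V) : Prop :=
  IsIndep G s ∧ ∀ t : Set V, IsIndep G t → t.ncard ≤ s.ncard



open Finset Function

section Cycle
variable {m : ℕ} (hm : 3 ≤ m) (hmo : m % 2 = 1)

/-- The arc `{c, c+2, ..., c+m-3}` in `ZMod m`. -/
def Aset (m : ℕ) (c : ZMod m) : Set (ZMod m) :=
  {x | Even ((x - c).val) ∧ (x - c).val < m - 1}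

include hm in
lemma val_add_one_lt {x : ZMod m} (h : x.val + 1 < m) : (x + 1).val = x.val + 1 := by
  haveI : NeZero m := ⟨by omega⟩
  have h1 : (1 : ZMod m).val = 1 := by
    have := ZMod.val_cast_of_lt (show 1 < m by omega)
    simpa using this
  rw [ZMod.val_add, h1, Nat.mod_eq_of_lt h]

include hm in
lemma Aset_add_one {c x : ZMod m} (hx : x ∈ Aset m c) : x + 1 ∉ Aset m c := by
  haveI : NeZero m := ⟨by omega⟩
  obtain ⟨he, hlt⟩ := hx
  intro ⟨he', _⟩
  have : x + 1 - c = (x - c) + 1 := by ring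
  rw [this, val_add_one_lt hm (by have := ZMod.val_lt (x - c); omega)] at he'
  rw [Nat.even_add_one] at he'
  exact he' he

include hm in
lemma mem_Aset_self (c : ZMod m) : c ∈ Aset m c := by
  constructor <;> simp [ZMod.val_zero] <;> omega

include hm hmo in
lemma Aset_inj {c c' : ZMod m} (h : Aset m c = Aset m c') : c = c' := by
  haveI : NeZero m := ⟨by omega⟩
  have h1 : c ∈ Aset m c' := h ▸ mem_Aset_self hm c
  have h2 : c' ∈ Aset m c := h.symm ▸ mem_Aset_self hm c'
  obtain ⟨he1, hl1⟩ := h1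
  obtain ⟨he2, hl2⟩ := h2
  have hadd : ((c - c') + (c' - c)).val = 0 := by simp [ZMod.val_zero]
  rw [ZMod.val_add] at hadd
  have hmod := Nat.mod_lt ((c - c').val + (c' - c).val) (show 0 < m by omega)
  have : (c - c').val + (c' - c).val = 0 ∨ (c - c').val + (c' - c).val = m := by
    rcases Nat.lt_or_ge ((c - c').val + (c' - c).val) m with h | h
    · left; rwa [Nat.mod_eq_of_lt h] at hadd
    · right
      have : (c - c').val + (c' - c).val - m < m := by omega
      have h2' : ((c - c').val + (c' - c).val) % m = ((c - c').val + (c' - c).val - m) % m := by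
        conv_lhs => rw [show (c - c').val + (c' - c).val = ((c - c').val + (c' - c).val - m) + m by omega]
        simp
      rw [h2', Nat.mod_eq_of_lt this] at hadd
      omega
  rcases this with h0 | hmm
  · have : (c' - c).val = 0 := by omega
    have := (ZMod.val_eq_zero _).mp this
    exact (sub_eq_zero.mp this).symm
  · rcases he1 with ⟨t, ht⟩; rcases he2 with ⟨t', ht'⟩; omega


include hm in
lemma Aset_eq_image (c : ZMod m) :
    Aset m c = (fun s : ℕ => c + (s : ZMod m)) '' {s | Even s ∧ s < m - 1} := by
  haveI : NeZero m := ⟨by omega⟩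
  ext x
  constructor
  · rintro ⟨he, hl⟩
    refine ⟨(x - c).val, ⟨he, hl⟩, ?_⟩
    dsimp only
    rw [ZMod.natCast_rightInverse _]
    ring
  · rintro ⟨s, ⟨he, hl⟩, rfl⟩
    have hv : ((s : ZMod m)).val = s := ZMod.val_cast_of_lt (by omega)
    have : c + (s : ZMod m) - c = (s : ZMod m) := by ring
    exact ⟨by rw [this, hv]; exact he, by rw [this, hv]; omega⟩

include hm hmo in
lemma Aset_ncard (c : ZMod m) : (Aset m c).ncard = m / 2 := by
  haveI : NeZero m := ⟨by omega⟩
  rw [Aset_eq_image hm c]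
  have hinj : Set.InjOn (fun s : ℕ => c + (s : ZMod m)) {s | Even s ∧ s < m - 1} := by
    intro s hs s' hs' h
    simp only [Set.mem_setOf_eq] at hs hs'
    simp only [add_right_inj] at h
    have := congrArg ZMod.val h
    rwa [ZMod.val_cast_of_lt (by omega : s < m), ZMod.val_cast_of_lt (by omega : s' < m)] at this
  rw [Set.ncard_image_of_injOn hinj]
  have hset : {s : ℕ | Even s ∧ s < m - 1} =
      ↑((Finset.range (m - 1)).filter (fun s => s % 2 = 0)) := by
    ext s
    simp [Nat.even_iff, Finset.mem_filter, Finset.mem_range, and_comm]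
  rw [hset, Set.ncard_coe_finset]
  have himg : (Finset.range (m / 2)).image (fun t => 2 * t) =
      (Finset.range (m - 1)).filter (fun s => s % 2 = 0) := by
    ext s
    simp only [Finset.mem_image, Finset.mem_filter, Finset.mem_range]
    constructor
    · rintro ⟨t, ht, rfl⟩; omega
    · rintro ⟨h1, h2⟩; exact ⟨s / 2, by omega, by omega⟩
  rw [← himg, Finset.card_image_of_injective _ (fun a b h => by omega), Finset.card_range]

include hm in
/-- Cycle upper bound: an independent set in `C_m` has at most `m/2` elements. -/
lemma cycle_bound (T : Finset (ZMod m)) (hT : ∀ x ∈ T, x + 1 ∉ T) : T.card ≤ m / 2 := by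
  haveI : NeZero m := ⟨by omega⟩
  classical
  have hdisj : Disjoint T (T.image (· + 1)) := by
    rw [Finset.disjoint_right]
    intro x hx hx'
    obtain ⟨y, hy, rfl⟩ := Finset.mem_image.mp hx
    exact hT y hy hx'
  have hcard : (T ∪ T.image (· + 1)).card = T.card + T.card := by
    rw [Finset.card_union_of_disjoint hdisj,
      Finset.card_image_of_injective _ (add_left_injective 1)]
  have := Finset.card_le_univ (T ∪ T.image (· + 1))
  rw [hcard] at this
  rw [ZMod.card] at this
  omega

include hm hmo in
lemma cycle_classify (T : Finset (ZMod m)) (hT : ∀ x ∈ T, x + 1 ∉ T)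
    (hcard : T.card = m / 2) : ∃ c, ↑T = Aset m c := by
  haveI : NeZero m := ⟨by omega⟩
  haveI : Fact (1 < m) := ⟨by omega⟩
  classical
  have hone : (1 : ZMod m) ≠ 0 := one_ne_zero
  set U := T ∪ T.image (· + 1) with hU
  have hdisj : Disjoint T (T.image (· + 1)) := by
    rw [Finset.disjoint_right]
    intro x hx hx'
    obtain ⟨y, hy, rfl⟩ := Finset.mem_image.mp hx
    exact hT y hy hx'
  have hUcard : U.card = m - 1 := by
    rw [hU, Finset.card_union_of_disjoint hdisj,
      Finset.card_image_of_injective _ (add_left_injective 1), hcard]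
    omega
  have hcompl : (Finset.univ \ U).card = 1 := by
    rw [Finset.card_sdiff_of_subset (Finset.subset_univ U), Finset.card_univ, ZMod.card, hUcard]
    omega
  obtain ⟨d, hd⟩ := Finset.card_eq_one.mp hcompl
  have hdU : d ∉ U := by
    have : d ∈ Finset.univ \ U := hd ▸ Finset.mem_singleton_self d
    exact (Finset.mem_sdiff.mp this).2
  have hdT : d ∉ T := fun h => hdU (Finset.mem_union_left _ h)
  have key : ∀ x : ZMod m, x ≠ d → (x ∈ T ↔ x - 1 ∉ T) := by
    intro x hx
    constructor
    · intro hxT h1T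
      have := hT (x - 1) h1T
      rw [sub_add_cancel] at this
      exact this hxT
    · intro h1
      by_contra hxT
      have hxU : x ∈ U := by
        by_contra hcon
        have : x ∈ Finset.univ \ U := Finset.mem_sdiff.mpr ⟨Finset.mem_univ x, hcon⟩
        rw [hd, Finset.mem_singleton] at this
        exact hx this
      rcases Finset.mem_union.mp hxU with h | h
      · exact hxT h
      · obtain ⟨y, hy, rfl⟩ := Finset.mem_image.mp h
        rw [add_sub_cancel_right] at h1
        exact h1 hy
  have main : ∀ s : ℕ, s < m → ((d + 1 + (s : ZMod m)) ∈ T ↔ (Even s ∧ s < m - 1)) := by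
    intro s
    induction s with
    | zero =>
      intro _
      simp only [Nat.cast_zero, add_zero]
      rw [key (d + 1) (by intro h; exact hone (by linear_combination h))]
      rw [add_sub_cancel_right]
      simp only [hdT, not_false_iff, true_iff, iff_true]
      exact ⟨Even.zero, by omega⟩
    | succ s ih =>
      intro hs
      by_cases hsm : s + 1 = m - 1
      · have hxd : (d + 1 + ((s + 1 : ℕ) : ZMod m)) = d := by
          rw [hsm, Nat.cast_sub (by omega : 1 ≤ m)]
          simp [ZMod.natCast_self]
        rw [hxd]
        constructor
        · intro h; exact absurd h hdT
        · rintro ⟨-, h⟩; omega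
      · have hxd : (d + 1 + ((s + 1 : ℕ) : ZMod m)) ≠ d := by
          intro h
          have h2 : ((s + 2 : ℕ) : ZMod m) = 0 := by push_cast at h ⊢; linear_combination h
          have := congrArg ZMod.val h2
          rw [ZMod.val_cast_of_lt (by omega : s + 2 < m), ZMod.val_zero] at this
          omega
        rw [key _ hxd]
        have hsub : d + 1 + ((s + 1 : ℕ) : ZMod m) - 1 = d + 1 + (s : ZMod m) := by
          push_cast; ring
        rw [hsub, ih (by omega)]
        constructor
        · intro h
          refine ⟨Nat.even_add_one.mpr (fun he => h ⟨he, by omega⟩), by omega⟩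
        · rintro ⟨he, -⟩ ⟨he', -⟩
          exact (Nat.even_add_one.mp he) he'
  refine ⟨d + 1, ?_⟩
  ext x
  have hx : x = d + 1 + (((x - (d + 1)).val : ℕ) : ZMod m) := by
    rw [ZMod.natCast_rightInverse _]; ring
  simp only [Finset.mem_coe]
  constructor
  · intro hxT
    exact (main _ (ZMod.val_lt _)).mp (by rwa [← hx])
  · intro hxA
    rw [hx]
    exact (main _ (ZMod.val_lt _)).mpr hxA

include hm hmo in
lemma Aset_disjoint_cases {c c' : ZMod m}
    (h : ∀ x, ¬(x ∈ Aset m c ∧ x ∈ Aset m c')) : c' = c + 1 ∨ c' = c - 1 := by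
  haveI : NeZero m := ⟨by omega⟩
  set s₀ := (c' - c).val with hs₀
  have hs₀m : s₀ < m := ZMod.val_lt _
  have fact : ∀ t : ℕ, Even t → t < m - 1 → ¬(Even ((s₀ + t) % m) ∧ (s₀ + t) % m < m - 1) := by
    intro t het hlt hcon
    apply h (c' + (t : ZMod m))
    have hvt : ((t : ZMod m)).val = t := ZMod.val_cast_of_lt (by omega)
    constructor
    · have h1 : c' + (t : ZMod m) - c = (c' - c) + (t : ZMod m) := by ring
      have h2 : (c' + (t : ZMod m) - c).val = (s₀ + t) % m := by
        rw [h1, ZMod.val_add, hvt]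
      exact ⟨by rw [h2]; exact hcon.1, by rw [h2]; exact hcon.2⟩
    · have h1 : c' + (t : ZMod m) - c' = (t : ZMod m) := by ring
      exact ⟨by rw [h1, hvt]; exact het, by rw [h1, hvt]; omega⟩
  by_cases hpar : Even s₀
  · right
    have := fact 0 Even.zero (by omega)
    rw [Nat.add_zero, Nat.mod_eq_of_lt hs₀m] at this
    have hs : s₀ = m - 1 := by
      by_contra hne
      exact this ⟨hpar, by omega⟩
    have : c' - c = ((m - 1 : ℕ) : ZMod m) := by
      rw [← hs, hs₀, ZMod.natCast_rightInverse _]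
    have hm1 : ((m - 1 : ℕ) : ZMod m) = -1 := by
      rw [Nat.cast_sub (by omega : 1 ≤ m)]
      simp [ZMod.natCast_self]
    rw [hm1] at this
    linear_combination this
  · -- s₀ odd
    rw [Nat.even_iff] at hpar
    by_cases hs1 : s₀ = 1
    · left
      have : c' - c = ((1 : ℕ) : ZMod m) := by rw [← hs1, hs₀, ZMod.natCast_rightInverse _]
      push_cast at this
      linear_combination this
    · exfalso
      have hge : 3 ≤ s₀ := by omega
      have hmod : (s₀ + (m - 3)) % m = s₀ - 3 := by
        rw [show s₀ + (m - 3) = (s₀ - 3) + m by omega, Nat.add_mod_right,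
          Nat.mod_eq_of_lt (by omega)]
      apply fact (m - 3) (by rw [Nat.even_iff]; omega) (by omega)
      rw [hmod]
      constructor
      · rw [Nat.even_iff]; omega
      · omega

end Cycle

section Torus
variable {m : ℕ} (hm : 3 ≤ m) (hmo : m % 2 = 1)

/-- The linear form `v ↦ ∑ aᵢ vᵢ`. -/
def Lmap {m N : ℕ} (a v : Fin N → ZMod m) : ZMod m := ∑ i, a i * v i

/-- The candidate maximum independent sets. -/
def Sset {m N : ℕ} (a : Fin N → ZMod m) (c : ZMod m) : Set (Fin N → ZMod m) :=
  {v | Lmap a v ∈ Aset m c}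

variable {N : ℕ}

include hm in
lemma torus_adj_iff {u v : Fin N → ZMod m} :
    (torus m N).Adj u v ↔ u ≠ v ∧
      ∃ j, (u j = v j + 1 ∨ u j = v j - 1) ∧ ∀ i, i ≠ j → u i = v i := by
  rw [torus, SimpleGraph.fromRel_adj]
  constructor
  · rintro ⟨hne, h | h⟩
    · exact ⟨hne, h⟩
    · obtain ⟨j, hj, hoth⟩ := h
      refine ⟨hne, j, ?_, fun i hi => (hoth i hi).symm⟩
      rcases hj with hj | hj
      · right; rw [hj]; ring
      · left; rw [hj]; ring
  · rintro ⟨hne, h⟩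
    exact ⟨hne, Or.inl h⟩

include hm in
lemma torus_adj_of {u v : Fin N → ZMod m} (j : Fin N)
    (hj : u j = v j + 1 ∨ u j = v j - 1) (hoth : ∀ i, i ≠ j → u i = v i) :
    (torus m N).Adj u v := by
  haveI : Fact (1 < m) := ⟨by omega⟩
  refine (torus_adj_iff hm).mpr ⟨?_, j, hj, hoth⟩
  intro h
  subst h
  rcases hj with hj | hj
  · exact one_ne_zero (by linear_combination -hj)
  · exact one_ne_zero (by linear_combination hj)

lemma Lmap_update (a w : Fin N → ZMod m) (i : Fin N) (y : ZMod m) :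
    Lmap a (Function.update w i y) = Lmap a w + a i * (y - w i) := by
  classical
  unfold Lmap
  have : ∀ j, a j * (Function.update w i y j) =
      a j * w j + (if j = i then a i * (y - w i) else 0) := by
    intro j
    by_cases hj : j = i
    · subst hj; simp [Function.update_self]; ring
    · simp [Function.update_of_ne hj, hj]
  rw [Finset.sum_congr rfl (fun j _ => this j), Finset.sum_add_distrib]
  simp

lemma Lmap_zero (a : Fin N → ZMod m) : Lmap a 0 = 0 := by simp [Lmap]

lemma Lmap_adj (a : Fin N → ZMod m) (hpm : ∀ i, a i = 1 ∨ a i = -1)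
    {u v : Fin N → ZMod m} (j : Fin N)
    (hj : u j = v j + 1 ∨ u j = v j - 1) (hoth : ∀ i, i ≠ j → u i = v i) :
    Lmap a u = Lmap a v + 1 ∨ Lmap a u = Lmap a v - 1 := by
  classical
  have hu : u = Function.update v j (u j) := by
    funext i
    by_cases hi : i = j
    · subst hi; simp
    · rw [Function.update_of_ne hi]; exact hoth i hi
  have hL : Lmap a u = Lmap a v + a j * (u j - v j) := by
    conv_lhs => rw [hu]
    exact Lmap_update a v j (u j)
  rcases hpm j with ha | ha <;> rcases hj with h | h
  · left; rw [hL, ha, h]; ring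
  · right; rw [hL, ha, h]; ring
  · right; rw [hL, ha, h]; ring
  · left; rw [hL, ha, h]; ring

include hm in
lemma Sset_indep (a : Fin N → ZMod m) (c : ZMod m) (hpm : ∀ i, a i = 1 ∨ a i = -1) :
    IsIndep (torus m N) (Sset a c) := by
  intro u hu v hv hne hadj
  obtain ⟨-, j, hj, hoth⟩ := (torus_adj_iff hm).mp hadj
  rcases Lmap_adj a hpm j hj hoth with h | h
  · exact Aset_add_one hm hv (h ▸ hu)
  · exact Aset_add_one hm hu (by rw [show Lmap a u + 1 = Lmap a v by rw [h]; ring]; exact hv)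

include hm hmo in
lemma two_inv_exists : ∃ w : ZMod m, 2 * w = 1 := by
  haveI : NeZero m := ⟨by omega⟩
  refine ⟨(((m + 1) / 2 : ℕ) : ZMod m), ?_⟩
  have h1 : ((2 * ((m + 1) / 2) : ℕ) : ZMod m) = ((m + 1 : ℕ) : ZMod m) := by
    rw [show 2 * ((m + 1) / 2) = m + 1 by omega]
  push_cast at h1
  rw [ZMod.natCast_self] at h1
  rw [h1]; ring

include hm hmo in
/-- solving a 2×2 linear system when the coefficient vectors differ -/
lemma Lmap_solve2 (a a' : Fin (N + 1) → ZMod m) (h0 : a 0 = 1) (h0' : a' 0 = 1)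
    (hpm : ∀ i, a i = 1 ∨ a i = -1) (hpm' : ∀ i, a' i = 1 ∨ a' i = -1)
    (hne : a ≠ a') (u u' : ZMod m) : ∃ v, Lmap a v = u ∧ Lmap a' v = u' := by
  classical
  obtain ⟨i, hi⟩ := Function.ne_iff.mp hne
  have hi0 : i ≠ 0 := by intro h; subst h; rw [h0, h0'] at hi; exact hi rfl
  obtain ⟨w, hw⟩ := two_inv_exists hm hmo
  have hd : a i - a' i = 2 ∨ a i - a' i = -2 := by
    rcases hpm i with h1 | h1 <;> rcases hpm' i with h2 | h2 <;> rw [h1, h2]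
    · exact absurd (h1.trans h2.symm) hi
    · left; ring
    · right; ring
    · exact absurd (h1.trans h2.symm) hi
  have hy : ∃ y : ZMod m, (a i - a' i) * y = u - u' := by
    rcases hd with hd | hd
    · exact ⟨(u - u') * w, by rw [hd]; linear_combination (u - u') * hw⟩
    · exact ⟨-((u - u') * w), by rw [hd]; linear_combination (u - u') * hw⟩
  obtain ⟨y, hy⟩ := hy
  set x := u - a i * y with hx
  refine ⟨Function.update (Function.update (0 : Fin (N + 1) → ZMod m) 0 x) i y, ?_, ?_⟩
  · rw [Lmap_update, Lmap_update, Lmap_zero]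
    rw [Function.update_of_ne hi0]
    simp only [Pi.zero_apply, h0, hx]
    ring
  · rw [Lmap_update, Lmap_update, Lmap_zero]
    rw [Function.update_of_ne hi0]
    simp only [Pi.zero_apply, h0', hx]
    linear_combination -hy

lemma Lmap_surj (a : Fin (N + 1) → ZMod m) (h0 : a 0 = 1) (u : ZMod m) :
    ∃ v, Lmap a v = u := by
  classical
  refine ⟨Function.update (0 : Fin (N + 1) → ZMod m) 0 u, ?_⟩
  rw [Lmap_update, Lmap_zero, h0]
  simp

include hm in
lemma fiber_ncard (a : Fin (N + 1) → ZMod m) (h0 : a 0 = 1) (x : ZMod m) :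
    {v : Fin (N + 1) → ZMod m | Lmap a v = x}.ncard = m ^ N := by
  haveI : NeZero m := ⟨by omega⟩
  rw [← Nat.card_coe_set_eq]
  have e : {v : Fin (N + 1) → ZMod m | Lmap a v = x} ≃ (Fin N → ZMod m) := by
    refine ⟨fun v => Fin.tail v.1, fun w =>
      ⟨Fin.cons (x - ∑ i : Fin N, a i.succ * w i) w, ?_⟩, ?_, ?_⟩
    · show Lmap a _ = x
      unfold Lmap
      rw [Fin.sum_univ_succ]
      simp [h0, Fin.cons]
    · intro ⟨v, hv⟩
      ext1
      dsimp only
      simp only [Set.mem_setOf_eq, Lmap] at hv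
      rw [Fin.sum_univ_succ, h0, one_mul] at hv
      have : v 0 = x - ∑ i : Fin N, a i.succ * Fin.tail v i := by
        rw [← hv]; simp [Fin.tail]
      rw [← this]
      exact Fin.cons_self_tail v
    · intro w
      simp [Fin.tail_cons]
  rw [Nat.card_congr e, Nat.card_eq_fintype_card]
  simp [ZMod.card]

/-- counting a preimage with constant fiber sizes -/
lemma ncard_preimage_const {α β : Type*} [Fintype α] [Fintype β]
    (f : α → β) (T : Set β) (K : ℕ) (hfib : ∀ x ∈ T, (f ⁻¹' {x}).ncard = K) :
    (f ⁻¹' T).ncard = T.ncard * K := by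
  classical
  rw [Set.ncard_eq_toFinset_card' (f ⁻¹' T), Set.ncard_eq_toFinset_card' T]
  rw [Finset.card_eq_sum_card_fiberwise (t := T.toFinset)
    (fun v hv => by simpa using (by simpa using hv : f v ∈ T))]
  rw [Finset.sum_congr rfl (fun x hx => ?_), Finset.sum_const, smul_eq_mul]
  have hx' : x ∈ T := by simpa using hx
  rw [← hfib x hx', Set.ncard_eq_toFinset_card' (f ⁻¹' {x})]
  congr 1
  ext v
  simp [Set.mem_toFinset]
  intro h
  rw [h]
  exact hx'

include hm hmo in
lemma Sset_ncard (a : Fin (N + 1) → ZMod m) (c : ZMod m) (h0 : a 0 = 1) :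
    (Sset a c).ncard = m / 2 * m ^ N := by
  haveI : NeZero m := ⟨by omega⟩
  have : Sset a c = (Lmap a) ⁻¹' (Aset m c) := rfl
  rw [this, ncard_preimage_const (Lmap a) (Aset m c) (m ^ N)
    (fun x _ => fiber_ncard hm a h0 x), Aset_ncard hm hmo]

include hm in
lemma indep_ncard_le (s : Set (Fin (N + 1) → ZMod m)) (hs : IsIndep (torus m (N + 1)) s) :
    s.ncard ≤ m / 2 * m ^ N := by
  haveI : NeZero m := ⟨by omega⟩
  haveI : Fact (1 < m) := ⟨by omega⟩
  classical
  rw [Set.ncard_eq_toFinset_card s (Set.toFinite s)]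
  set F := (Set.toFinite s).toFinset with hF
  rw [Finset.card_eq_sum_card_fiberwise (f := Fin.tail) (t := Finset.univ)
    (fun v _ => Finset.mem_univ _)]
  have hfib : ∀ w : Fin N → ZMod m, (F.filter (fun v => Fin.tail v = w)).card ≤ m / 2 := by
    intro w
    have hinj : Set.InjOn (fun v => v 0)
        ((F.filter (fun v => Fin.tail v = w) : Finset (Fin (N + 1) → ZMod m)) :
          Set (Fin (N + 1) → ZMod m)) := by
      intro v hv v' hv' h
      simp only [Finset.coe_filter, Set.mem_setOf_eq] at hv hv'
      funext i
      refine Fin.cases ?_ (fun j => ?_) i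
      · exact h
      · have := hv.2.trans hv'.2.symm
        exact congrFun this j
    rw [← Finset.card_image_of_injOn hinj]
    apply cycle_bound hm
    intro x hx hx1
    obtain ⟨v, hv, hv0⟩ := Finset.mem_image.mp hx
    obtain ⟨v', hv', hv'0⟩ := Finset.mem_image.mp hx1
    simp only [Finset.mem_filter, hF, Set.Finite.mem_toFinset] at hv hv'
    have hne : v' ≠ v := by
      intro h
      rw [h, hv0] at hv'0
      exact one_ne_zero (by linear_combination -hv'0)
    refine hs hv'.1 hv.1 hne (torus_adj_of hm 0 ?_ ?_)
    · left; rw [hv'0, hv0]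
    · intro i hi
      obtain ⟨j, rfl⟩ := Fin.exists_succ_eq.mpr hi
      exact (congrFun hv'.2 j).trans (congrFun hv.2 j).symm
  calc ∑ w : Fin N → ZMod m, (F.filter (fun v => Fin.tail v = w)).card
      ≤ ∑ _w : Fin N → ZMod m, m / 2 := Finset.sum_le_sum (fun w _ => hfib w)
    _ = m / 2 * m ^ N := by
        have hcard : (Finset.univ : Finset (Fin N → ZMod m)).card = m ^ N := by
          simp [ZMod.card]
        rw [Finset.sum_const, hcard, smul_eq_mul, mul_comm]

lemma Aset_mem_shift (c e x : ZMod m) : x ∈ Aset m (c + e) ↔ x - e ∈ Aset m c := by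
  simp only [Aset, Set.mem_setOf_eq, show x - (c + e) = x - e - c from by ring]

include hm in
lemma zmod_const {α : Sort*} (f : ZMod m → α) (h : ∀ t, f (t + 1) = f t) (t : ZMod m) :
    f t = f 0 := by
  haveI : NeZero m := ⟨by omega⟩
  have key : ∀ s : ℕ, f ((s : ℕ) : ZMod m) = f 0 := by
    intro s
    induction s with
    | zero => simp
    | succ s ih =>
      have : ((s + 1 : ℕ) : ZMod m) = ((s : ℕ) : ZMod m) + 1 := by push_cast; ring
      rw [this, h, ih]
  have := key t.val
  rwa [ZMod.natCast_rightInverse t] at this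

include hm hmo in
lemma steps_const (g : ZMod m → ZMod m)
    (h : ∀ t, g (t + 1) = g t + 1 ∨ g (t + 1) = g t - 1) :
    (∀ t, g (t + 1) = g t + 1) ∨ (∀ t, g (t + 1) = g t - 1) := by
  haveI : NeZero m := ⟨by omega⟩
  classical
  set hfun : ℕ → ℤ := fun i => if g ((i : ZMod m) + 1) = g (i : ZMod m) + 1 then 1 else -1
    with hhfun
  have hval1 : ∀ i : ℕ, hfun i = 1 → g ((i : ZMod m) + 1) = g (i : ZMod m) + 1 := by
    intro i h1
    by_cases hc : g ((i : ZMod m) + 1) = g (i : ZMod m) + 1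
    · exact hc
    · exfalso
      rw [hhfun] at h1
      simp only at h1
      rw [if_neg hc] at h1
      norm_num at h1
  have hval2 : ∀ i : ℕ, hfun i ≠ 1 → (hfun i = -1 ∧ g ((i : ZMod m) + 1) = g (i : ZMod m) - 1) := by
    intro i h1
    by_cases hc : g ((i : ZMod m) + 1) = g (i : ZMod m) + 1
    · exact absurd (by rw [hhfun]; simp only; rw [if_pos hc]) h1
    · constructor
      · rw [hhfun]; simp only; rw [if_neg hc]
      · exact (h _).resolve_left hc
  have hstep : ∀ i : ℕ, g ((i : ZMod m) + 1) = g (i : ZMod m) + ((hfun i : ℤ) : ZMod m) := by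
    intro i
    by_cases h1 : hfun i = 1
    · rw [h1, hval1 i h1]; norm_num
    · obtain ⟨h2, h3⟩ := hval2 i h1
      rw [h2, h3]; push_cast; ring
  have hsum : ∀ K : ℕ,
      g ((K : ℕ) : ZMod m) = g 0 + ((∑ i ∈ Finset.range K, hfun i : ℤ) : ZMod m) := by
    intro K
    induction K with
    | zero => simp
    | succ K ih =>
      have hc : ((K + 1 : ℕ) : ZMod m) = ((K : ℕ) : ZMod m) + 1 := by push_cast; ring
      rw [hc, hstep K, ih, Finset.sum_range_succ]
      push_cast
      ring
  have hdvd : (m : ℤ) ∣ ∑ i ∈ Finset.range m, hfun i := by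
    have := hsum m
    rw [ZMod.natCast_self] at this
    have h0 : ((∑ i ∈ Finset.range m, hfun i : ℤ) : ZMod m) = 0 := by
      linear_combination -this
    exact (ZMod.intCast_zmod_eq_zero_iff_dvd _ m).mp h0
  set P := (Finset.range m).filter (fun i => hfun i = 1) with hP
  set Q := (Finset.range m).filter (fun i => ¬hfun i = 1) with hQ
  have hsplit : ∑ i ∈ Finset.range m, hfun i = 2 * (P.card : ℤ) - m := by
    rw [← Finset.sum_filter_add_sum_filter_not (Finset.range m) (fun i => hfun i = 1)]
    have h1 : ∑ i ∈ P, hfun i = (P.card : ℤ) := by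
      rw [Finset.sum_congr rfl (fun i hi => (Finset.mem_filter.mp hi).2)]
      simp
      rfl
    have h2 : ∑ i ∈ Q, hfun i = -(Q.card : ℤ) := by
      rw [Finset.sum_congr rfl (fun i hi => (hval2 i (Finset.mem_filter.mp hi).2).1)]
      simp
      rfl
    have hcards : P.card + Q.card = m := by
      rw [hP, hQ, Finset.card_filter_add_card_filter_not, Finset.card_range]
    rw [← hP, ← hQ, h1, h2]
    have : (P.card : ℤ) + Q.card = m := by exact_mod_cast hcards
    linarith
  have hPle : P.card ≤ m := le_trans (Finset.card_filter_le _ _) (by rw [Finset.card_range])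
  obtain ⟨q, hq⟩ := hdvd
  rw [hsplit] at hq
  have hq1 : q = 1 ∨ q = -1 := by
    have hmpos : (0 : ℤ) < m := by positivity
    have hle : (m : ℤ) * q ≤ m * 1 := by rw [← hq]; push_cast; omega
    have hge : (m : ℤ) * (-1) ≤ m * q := by rw [← hq]; push_cast; omega
    have hq2 : q ≤ 1 := le_of_mul_le_mul_left hle hmpos
    have hq3 : -1 ≤ q := le_of_mul_le_mul_left hge hmpos
    have hq0 : q ≠ 0 := by
      intro h0
      rw [h0, mul_zero] at hq
      omega
    omega
  rcases hq1 with hq1 | hq1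
  · rw [hq1, mul_one] at hq
    have hPm : P.card = m := by omega
    have hPall : P = Finset.range m := Finset.eq_of_subset_of_card_le
      (Finset.filter_subset _ _) (by rw [Finset.card_range, hPm])
    left
    intro t
    have hmem : t.val ∈ P := by rw [hPall]; exact Finset.mem_range.mpr (ZMod.val_lt t)
    have h1 := hval1 t.val (Finset.mem_filter.mp hmem).2
    rwa [ZMod.natCast_rightInverse t] at h1
  · rw [hq1, mul_neg_one] at hq
    have hPm : P.card = 0 := by omega
    right
    intro t
    have hmem : t.val ∉ P := by
      intro hmem
      rw [Finset.card_eq_zero.mp hPm] at hmem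
      exact absurd hmem (Finset.notMem_empty _)
    have h1 : hfun t.val ≠ 1 := by
      intro hc
      exact hmem (Finset.mem_filter.mpr ⟨Finset.mem_range.mpr (ZMod.val_lt t), hc⟩)
    have h2 := (hval2 t.val h1).2
    rwa [ZMod.natCast_rightInverse t] at h2

lemma fun1_eta (v : Fin 1 → ZMod m) : (fun _ : Fin 1 => v 0) = v := by
  funext i
  exact (congrArg v (Fin.fin_one_eq_zero i)).symm

include hm hmo in
lemma structure_base (s : Set (Fin 1 → ZMod m)) (hind : IsIndep (torus m 1) s)
    (hcard : s.ncard = m / 2) :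
    ∃ (a : Fin 1 → ZMod m) (c : ZMod m), a 0 = 1 ∧ (∀ i, a i = 1 ∨ a i = -1) ∧
      s = Sset a c := by
  haveI : NeZero m := ⟨by omega⟩
  haveI : Fact (1 < m) := ⟨by omega⟩
  classical
  set F := (Set.toFinite s).toFinset with hF
  set T := F.image (fun v => v 0) with hT
  have hmemT : ∀ x : ZMod m, x ∈ T ↔ (fun _ : Fin 1 => x) ∈ s := by
    intro x
    rw [hT]
    simp only [Finset.mem_image, hF, Set.Finite.mem_toFinset]
    constructor
    · rintro ⟨v, hv, rfl⟩
      rwa [fun1_eta v]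
    · intro h
      exact ⟨_, h, rfl⟩
  have hTind : ∀ x ∈ T, x + 1 ∉ T := by
    intro x hx hx1
    rw [hmemT] at hx hx1
    have hne : (fun _ : Fin 1 => x + 1) ≠ (fun _ : Fin 1 => x) := by
      intro h
      have := congrFun h 0
      exact one_ne_zero (by linear_combination this)
    refine hind hx1 hx hne (torus_adj_of hm 0 (Or.inl rfl) ?_)
    intro i hi
    exact absurd (Fin.fin_one_eq_zero i) hi
  have hTcard : T.card = m / 2 := by
    have hinj : Set.InjOn (fun v : Fin 1 → ZMod m => v 0) (F : Set (Fin 1 → ZMod m)) := by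
      intro v _ v' _ h
      simp only at h
      rw [← fun1_eta v, ← fun1_eta v', h]
    rw [hT, Finset.card_image_of_injOn hinj, hF,
      ← Set.ncard_eq_toFinset_card s (Set.toFinite s), hcard]
  obtain ⟨c, hc⟩ := cycle_classify hm hmo T hTind hTcard
  refine ⟨fun _ => 1, c, rfl, fun _ => Or.inl rfl, ?_⟩
  ext v
  have hL : Lmap (fun _ : Fin 1 => (1 : ZMod m)) v = v 0 := by
    unfold Lmap
    rw [Fin.sum_univ_one, one_mul]
  have hmem : v ∈ s ↔ v 0 ∈ T := by
    rw [hmemT, fun1_eta v]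
  rw [hmem]
  show v 0 ∈ T ↔ Lmap _ v ∈ Aset m c
  rw [hL, ← hc, Finset.mem_coe]

include hm hmo in
theorem structure_thm : ∀ (N : ℕ) (s : Set (Fin (N + 1) → ZMod m)),
    IsIndep (torus m (N + 1)) s → s.ncard = m / 2 * m ^ N →
    ∃ (a : Fin (N + 1) → ZMod m) (c : ZMod m), a 0 = 1 ∧ (∀ i, a i = 1 ∨ a i = -1) ∧
      s = Sset a c := by
  intro N
  induction N with
  | zero =>
    intro s h1 h2
    rw [pow_zero, mul_one] at h2
    exact structure_base hm hmo s h1 h2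
  | succ N ih =>
    intro s hind hcard
    haveI : NeZero m := ⟨by omega⟩
    haveI : Fact (1 < m) := ⟨by omega⟩
    classical
    set slc : ZMod m → Set (Fin (N + 1) → ZMod m) := fun t => {v | Fin.snoc v t ∈ s}
      with hslc
    have hslc_ind : ∀ t, IsIndep (torus m (N + 1)) (slc t) := by
      intro t u hu v hv hne hadj
      obtain ⟨hne', j, hj, hoth⟩ := (torus_adj_iff hm).mp hadj
      have hsne : (Fin.snoc u t : Fin (N + 2) → ZMod m) ≠ Fin.snoc v t := by
        intro h
        exact hne (funext fun i => by
          have := congrFun h i.castSucc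
          rwa [Fin.snoc_castSucc, Fin.snoc_castSucc] at this)
      refine hind hu hv hsne (torus_adj_of hm j.castSucc ?_ ?_)
      · rwa [Fin.snoc_castSucc, Fin.snoc_castSucc]
      · intro i hi
        by_cases hl : i = Fin.last (N + 1)
        · subst hl; rw [Fin.snoc_last, Fin.snoc_last]
        · obtain ⟨i', rfl⟩ := Fin.exists_castSucc_eq.mpr hl
          rw [Fin.snoc_castSucc, Fin.snoc_castSucc]
          exact hoth i' (fun h => hi (congrArg Fin.castSucc h))
    have hsum : s.ncard = ∑ t : ZMod m, (slc t).ncard := by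
      rw [Set.ncard_eq_toFinset_card s (Set.toFinite s)]
      rw [Finset.card_eq_sum_card_fiberwise (f := fun v => v (Fin.last (N + 1)))
        (t := Finset.univ) (fun v _ => Finset.mem_univ _)]
      refine Finset.sum_congr rfl (fun t _ => ?_)
      rw [Set.ncard_eq_toFinset_card _ (Set.toFinite (slc t))]
      apply Finset.card_bij (fun v _ => Fin.init v)
      · intro v hv
        simp only [Finset.mem_filter, Set.Finite.mem_toFinset] at hv ⊢
        show Fin.snoc (Fin.init v) t ∈ s
        rw [← hv.2, Fin.snoc_init_self]
        exact hv.1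
      · intro v hv v' hv' h
        simp only [Finset.mem_filter, Set.Finite.mem_toFinset] at hv hv'
        funext i
        by_cases hl : i = Fin.last (N + 1)
        · subst hl; rw [hv.2, hv'.2]
        · obtain ⟨i', rfl⟩ := Fin.exists_castSucc_eq.mpr hl
          exact congrFun h i'
      · intro u hu
        simp only [Set.Finite.mem_toFinset] at hu
        refine ⟨Fin.snoc u t, ?_, by simp⟩
        simp only [Finset.mem_filter, Set.Finite.mem_toFinset]
        exact ⟨hu, by simp⟩
    have hle : ∀ t, (slc t).ncard ≤ m / 2 * m ^ N := fun t => indep_ncard_le hm _ (hslc_ind t)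
    have heq : ∀ t : ZMod m, (slc t).ncard = m / 2 * m ^ N := by
      have htot : ∑ t : ZMod m, (slc t).ncard = ∑ _t : ZMod m, m / 2 * m ^ N := by
        rw [← hsum, hcard, Finset.sum_const, Finset.card_univ, ZMod.card, smul_eq_mul,
          pow_succ]
        ring
      exact fun t =>
        (Finset.sum_eq_sum_iff_of_le (fun t _ => hle t)).mp htot t (Finset.mem_univ t)
    have hex : ∀ t : ZMod m, ∃ ac : (Fin (N + 1) → ZMod m) × ZMod m,
        ac.1 0 = 1 ∧ (∀ i, ac.1 i = 1 ∨ ac.1 i = -1) ∧ slc t = Sset ac.1 ac.2 := by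
      intro t
      obtain ⟨a, c, h1, h2, h3⟩ := ih (slc t) (hslc_ind t) (heq t)
      exact ⟨(a, c), h1, h2, h3⟩
    choose ac hac1 hac2 hac3 using hex
    have hdisj : ∀ t : ZMod m, ∀ v, ¬(v ∈ slc t ∧ v ∈ slc (t + 1)) := by
      rintro t v ⟨h1, h2⟩
      have hne : (Fin.snoc v (t + 1) : Fin (N + 2) → ZMod m) ≠ Fin.snoc v t := by
        intro h
        have := congrFun h (Fin.last (N + 1))
        rw [Fin.snoc_last, Fin.snoc_last] at this
        exact one_ne_zero (by linear_combination this)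
      refine hind h2 h1 hne (torus_adj_of hm (Fin.last (N + 1)) ?_ ?_)
      · left; rw [Fin.snoc_last, Fin.snoc_last]
      · intro i hi
        obtain ⟨i', rfl⟩ := Fin.exists_castSucc_eq.mpr hi
        rw [Fin.snoc_castSucc, Fin.snoc_castSucc]
    have haconst : ∀ t, (fun t => (ac t).1) (t + 1) = (fun t => (ac t).1) t := by
      intro t
      by_contra hne
      obtain ⟨v, hv1, hv2⟩ := Lmap_solve2 hm hmo (ac t).1 (ac (t + 1)).1 (hac1 t)
        (hac1 (t + 1)) (hac2 t) (hac2 (t + 1)) (fun h => hne (by simpa using h.symm))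
        (ac t).2 (ac (t + 1)).2
      apply hdisj t v
      constructor
      · rw [hac3 t]
        show Lmap (ac t).1 v ∈ Aset m (ac t).2
        rw [hv1]
        exact mem_Aset_self hm _
      · rw [hac3 (t + 1)]
        show Lmap (ac (t + 1)).1 v ∈ Aset m (ac (t + 1)).2
        rw [hv2]
        exact mem_Aset_self hm _
    have haconst' : ∀ t, (ac t).1 = (ac 0).1 :=
      zmod_const hm (fun t => (ac t).1) haconst
    set a := (ac 0).1 with ha
    have ha0 : a 0 = 1 := hac1 0
    have hAdisj : ∀ t : ZMod m, ∀ x, ¬(x ∈ Aset m ((ac t).2) ∧ x ∈ Aset m ((ac (t + 1)).2)) := by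
      rintro t x ⟨h1, h2⟩
      obtain ⟨v, hv⟩ := Lmap_surj a ha0 x
      apply hdisj t v
      constructor
      · rw [hac3 t]
        show Lmap (ac t).1 v ∈ Aset m (ac t).2
        rw [haconst' t, hv]
        exact h1
      · rw [hac3 (t + 1)]
        show Lmap (ac (t + 1)).1 v ∈ Aset m (ac (t + 1)).2
        rw [haconst' (t + 1), hv]
        exact h2
    have hsteps : ∀ t : ZMod m, (fun t => (ac t).2) (t + 1) = (fun t => (ac t).2) t + 1 ∨
        (fun t => (ac t).2) (t + 1) = (fun t => (ac t).2) t - 1 :=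
      fun t => Aset_disjoint_cases hm hmo (hAdisj t)
    obtain ⟨ε, hε, hstepε⟩ : ∃ ε : ZMod m, (ε = 1 ∨ ε = -1) ∧
        ∀ t, (ac (t + 1)).2 = (ac t).2 + ε := by
      rcases steps_const hm hmo (fun t => (ac t).2) hsteps with hstep | hstep
      · exact ⟨1, Or.inl rfl, fun t => hstep t⟩
      · exact ⟨-1, Or.inr rfl, fun t => by rw [hstep t]; ring⟩
    have hc : ∀ t, (ac t).2 = (ac 0).2 + ε * t := by
      have hkey := zmod_const hm (fun t => (ac t).2 - ε * t)
        (fun t => by show (ac (t + 1)).2 - ε * (t + 1) = (ac t).2 - ε * t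
                     rw [hstepε t]; ring)
      intro t
      have h := hkey t
      linear_combination h
    refine ⟨Fin.snoc a (-ε), (ac 0).2, ?_, ?_, ?_⟩
    · show (Fin.snoc a (-ε) : Fin (N + 2) → ZMod m) 0 = 1
      rw [show (0 : Fin (N + 2)) = Fin.castSucc 0 from (Fin.castSucc_zero).symm,
        Fin.snoc_castSucc]
      exact ha0
    · intro i
      by_cases hl : i = Fin.last (N + 1)
      · subst hl
        rw [Fin.snoc_last]
        rcases hε with hε | hε
        · right; rw [hε]
        · left; rw [hε, neg_neg]
      · obtain ⟨i', rfl⟩ := Fin.exists_castSucc_eq.mpr hl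
        rw [Fin.snoc_castSucc]
        exact hac2 0 i'
    · ext v
      have hL : Lmap (Fin.snoc a (-ε)) v =
          Lmap a (Fin.init v) + (-ε) * v (Fin.last (N + 1)) := by
        unfold Lmap
        rw [Fin.sum_univ_castSucc, Fin.snoc_last]
        congr 1
        refine Finset.sum_congr rfl (fun i _ => ?_)
        rw [Fin.snoc_castSucc]
        rfl
      have h1 : v ∈ s ↔ Fin.init v ∈ slc (v (Fin.last (N + 1))) := by
        rw [hslc]
        simp only [Set.mem_setOf_eq, Fin.snoc_init_self]
      rw [h1, hac3, haconst']
      show Lmap a (Fin.init v) ∈ Aset m ((ac (v (Fin.last (N + 1)))).2) ↔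
        Lmap (Fin.snoc a (-ε)) v ∈ Aset m ((ac 0).2)
      rw [hc (v (Fin.last (N + 1))), Aset_mem_shift, hL]
      have : Lmap a (Fin.init v) + (-ε) * v (Fin.last (N + 1)) =
          Lmap a (Fin.init v) - ε * v (Fin.last (N + 1)) := by ring
      rw [this]

include hm in
lemma Aset_sub_one_not_mem (c : ZMod m) : c - 1 ∉ Aset m c := by
  haveI : NeZero m := ⟨by omega⟩
  rintro ⟨-, hl⟩
  have h1 : c - 1 - c = ((m - 1 : ℕ) : ZMod m) := by
    rw [Nat.cast_sub (by omega : 1 ≤ m), ZMod.natCast_self]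
    ring
  rw [h1, ZMod.val_cast_of_lt (by omega : m - 1 < m)] at hl
  omega

include hm hmo in
lemma Sset_inj (a a' : Fin (N + 1) → ZMod m) (c c' : ZMod m)
    (h0 : a 0 = 1) (h0' : a' 0 = 1)
    (hpm : ∀ i, a i = 1 ∨ a i = -1) (hpm' : ∀ i, a' i = 1 ∨ a' i = -1)
    (h : Sset a c = Sset a' c') : a = a' ∧ c = c' := by
  by_cases hne : a = a'
  · subst hne
    refine ⟨rfl, Aset_inj hm hmo ?_⟩
    ext x
    obtain ⟨v, hv⟩ := Lmap_surj a h0 x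
    have hiff := Set.ext_iff.mp h v
    constructor
    · intro hx
      have : v ∈ Sset a c := by show Lmap a v ∈ Aset m c; rw [hv]; exact hx
      have := hiff.mp this
      show x ∈ Aset m c'
      rw [← hv]
      exact this
    · intro hx
      have : v ∈ Sset a c' := by show Lmap a v ∈ Aset m c'; rw [hv]; exact hx
      have := hiff.mpr this
      show x ∈ Aset m c
      rw [← hv]
      exact this
  · exfalso
    obtain ⟨v, hv1, hv2⟩ := Lmap_solve2 hm hmo a a' h0 h0' hpm hpm' hne c (c' - 1)
    have hmem : v ∈ Sset a c := by show Lmap a v ∈ Aset m c; rw [hv1]; exact mem_Aset_self hm c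
    rw [h] at hmem
    have : c' - 1 ∈ Aset m c' := by rw [← hv2]; exact hmem
    exact Aset_sub_one_not_mem hm c' this

include hm hmo in
lemma maxIndep_iff (s : Set (Fin (N + 1) → ZMod m)) :
    MaxIndep (torus m (N + 1)) s ↔
      IsIndep (torus m (N + 1)) s ∧ s.ncard = m / 2 * m ^ N := by
  constructor
  · rintro ⟨h1, h2⟩
    refine ⟨h1, le_antisymm (indep_ncard_le hm s h1) ?_⟩
    have := h2 (Sset (fun _ => 1) 0) (Sset_indep hm _ _ (fun _ => Or.inl rfl))
    rwa [Sset_ncard hm hmo _ _ rfl] at this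
  · rintro ⟨h1, h2⟩
    exact ⟨h1, fun t ht => by rw [h2]; exact indep_ncard_le hm t ht⟩

include hm hmo in
lemma final_count :
    {s : Set (Fin (N + 1) → ZMod m) | MaxIndep (torus m (N + 1)) s}.ncard = m * 2 ^ N := by
  haveI : NeZero m := ⟨by omega⟩
  haveI : Fact (1 < m) := ⟨by omega⟩
  classical
  set Φ : ((Fin N → {x : ZMod m // x = 1 ∨ x = -1}) × ZMod m) → Set (Fin (N + 1) → ZMod m) :=
    fun p => Sset (Fin.cons 1 (fun i => (p.1 i : ZMod m))) p.2 with hΦ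
  have hpm : ∀ (b : Fin N → {x : ZMod m // x = 1 ∨ x = -1}) (i : Fin (N + 1)),
      (Fin.cons 1 (fun i => (b i : ZMod m)) : Fin (N + 1) → ZMod m) i = 1 ∨
      (Fin.cons 1 (fun i => (b i : ZMod m)) : Fin (N + 1) → ZMod m) i = -1 := by
    intro b i
    refine Fin.cases ?_ (fun j => ?_) i
    · rw [Fin.cons_zero]; exact Or.inl rfl
    · rw [Fin.cons_succ]; exact (b j).2
  have hne12 : (1 : ZMod m) ≠ -1 := by
    intro h
    have h2 : ((2 : ℕ) : ZMod m) = 0 := by push_cast; linear_combination h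
    have := congrArg ZMod.val h2
    rw [ZMod.val_cast_of_lt (by omega : 2 < m), ZMod.val_zero] at this
    omega
  have hΦinj : Function.Injective Φ := by
    rintro ⟨b, c⟩ ⟨b', c'⟩ h
    rw [hΦ] at h
    simp only at h
    obtain ⟨ha, hc⟩ := Sset_inj hm hmo _ _ _ _ (Fin.cons_zero _ _) (Fin.cons_zero _ _)
      (hpm b) (hpm b') h
    have hb : b = b' := by
      funext i
      refine Subtype.ext ?_
      have := congrFun ha i.succ
      rwa [Fin.cons_succ, Fin.cons_succ] at this
    rw [hb, hc]
  have hset : {s : Set (Fin (N + 1) → ZMod m) | MaxIndep (torus m (N + 1)) s} =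
      Set.range Φ := by
    ext s
    simp only [Set.mem_setOf_eq, Set.mem_range]
    rw [maxIndep_iff hm hmo]
    constructor
    · rintro ⟨h1, h2⟩
      obtain ⟨a, c, ha0, hapm, rfl⟩ := structure_thm hm hmo N _ h1 h2
      refine ⟨(fun i => ⟨a i.succ, hapm i.succ⟩, c), ?_⟩
      rw [hΦ]
      simp only
      show Sset (Fin.cons 1 (fun i => a i.succ)) c = Sset a c
      have hae : (Fin.cons 1 (fun i => a i.succ) : Fin (N + 1) → ZMod m) = a := by
        funext i
        refine Fin.cases ?_ (fun j => ?_) i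
        · rw [Fin.cons_zero, ha0]
        · rw [Fin.cons_succ]
      rw [hae]
    · rintro ⟨p, rfl⟩
      exact ⟨Sset_indep hm _ _ (hpm p.1),
        Sset_ncard hm hmo _ _ (Fin.cons_zero _ _)⟩
  rw [hset, ← Set.image_univ, Set.ncard_image_of_injective _ hΦinj, Set.ncard_univ]
  rw [Nat.card_eq_fintype_card, Fintype.card_prod, ZMod.card]
  have hsub : Fintype.card {x : ZMod m // x = 1 ∨ x = -1} = 2 := by
    rw [Fintype.card_subtype]
    have hfe : (Finset.univ.filter (fun x : ZMod m => x = 1 ∨ x = -1)) =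
        ({1, -1} : Finset (ZMod m)) := by
      ext y
      simp [Finset.mem_filter, Finset.mem_insert]
    rw [hfe]
    exact Finset.card_pair hne12
  have hfn : Fintype.card (Fin N → {x : ZMod m // x = 1 ∨ x = -1}) = 2 ^ N := by
    rw [Fintype.card_fun, hsub, Fintype.card_fin]
  rw [hfn]
  ring

end Torus


/-- For `m ≥ 3` odd, `Z_m^n` has exactly `m · 2^(n-1)` maximum independent sets, each of
cardinality `⌊m/2⌋ · m^(n-1)`. -/
theorem stmt_7 (m n : ℕ) (hm : 3 ≤ m) (hmo : Odd m) (hn : 1 ≤ n) :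
    {s : Set (Fin n → ZMod m) | MaxIndep (torus m n) s}.ncard = m * 2 ^ (n - 1) ∧
    ∀ s : Set (Fin n → ZMod m), MaxIndep (torus m n) s → s.ncard = m / 2 * m ^ (n - 1) := by
  obtain ⟨N, rfl⟩ : ∃ N, n = N + 1 := ⟨n - 1, by omega⟩
  have hmo' : m % 2 = 1 := Nat.odd_iff.mp hmo
  constructor
  · simpa using final_count hm hmo'
  · intro s hs
    simpa using ((maxIndep_iff hm hmo' s).mp hs).2
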